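/- arXiv:2412.15367 — 2 statements merged into one kernel-verified Lean document; each statement's English description precedes it below -/
import Mathlib

section
/- Let w be a Gauss code on n ≥ 1 crossings and let S be a nonempty cut set such that, within every arc determined by S, every over position occurs (in arc order) before every under position. Then there exists a valid over-first schedule for (w, S). -/
/-- A Gauss code on `n` crossings: each crossing `c` has exactly one over
position (value `(c, true)`) and exactly one under position (value `(c, false)`). -/
def IsGaussCode {n : ℕ} (w : ZMod (2*n) → Fin n × Bool) : Prop :=
  ∀ (c : Fin n) (b : Bool), ∃! i, w i = (c, b)

/-- The cyclic distance from the start of the arc (w.r.t. the cut set `S`)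
containing `p` back to `p`: the least `d` with `p - d ∈ S`. -/
noncomputable def arcDist {m : ℕ} (S : Set (ZMod m)) (p : ZMod m) : ℕ :=
  sInf {d : ℕ | p - (d : ZMod m) ∈ S}

/-- The start of the arc containing `p`, for the cut set `S`. -/
noncomputable def arcStart {m : ℕ} (S : Set (ZMod m)) (p : ZMod m) : ZMod m :=
  p - (arcDist S p : ZMod m)

/-- A valid over-first schedule for `(w, S)`: a bijection `τ` assigning times,
increasing along each arc in arc order, giving every crossing's over position
a smaller time than its under position. -/
def ValidOverFirst {n : ℕ} (w : ZMod (2*n) → Fin n × Bool)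
    (S : Set (ZMod (2*n))) (τ : ZMod (2*n) ≃ Fin (2*n)) : Prop :=
  (∀ p q, arcStart S p = arcStart S q → arcDist S p < arcDist S q →
      (τ p : ℕ) < (τ q : ℕ)) ∧
  ∀ (c : Fin n) (p q), w p = (c, true) → w q = (c, false) → (τ p : ℕ) < (τ q : ℕ)

/-- A valid under-first schedule: increasing along arcs, every crossing's over
position gets a *later* time than its under position. -/
def ValidUnderFirst {n : ℕ} (w : ZMod (2*n) → Fin n × Bool)
    (S : Set (ZMod (2*n))) (τ : ZMod (2*n) ≃ Fin (2*n)) : Prop :=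
  (∀ p q, arcStart S p = arcStart S q → arcDist S p < arcDist S q →
      (τ p : ℕ) < (τ q : ℕ)) ∧
  ∀ (c : Fin n) (p q), w p = (c, true) → w q = (c, false) → (τ q : ℕ) < (τ p : ℕ)

/-- The over-first danceability number of `w`: least cardinality of a nonempty
cut set admitting a valid over-first schedule. -/
noncomputable def overDanceNum {n : ℕ} (w : ZMod (2*n) → Fin n × Bool) : ℕ :=
  sInf {k | ∃ S : Set (ZMod (2*n)), S.Nonempty ∧ Nat.card S = k ∧
    ∃ τ, ValidOverFirst w S τ}

/-- The under-first danceability number of `w`. -/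
noncomputable def underDanceNum {n : ℕ} (w : ZMod (2*n) → Fin n × Bool) : ℕ :=
  sInf {k | ∃ S : Set (ZMod (2*n)), S.Nonempty ∧ Nat.card S = k ∧
    ∃ τ, ValidUnderFirst w S τ}

/-- The set of bridge starts of `w`. -/
def BridgeStarts {n : ℕ} (w : ZMod (2*n) → Fin n × Bool) : Set (ZMod (2*n)) :=
  {p | (w p).2 = true ∧ (w (p - 1)).2 = false}

/-- The reversal of a Gauss code. -/
def revCode {n : ℕ} (w : ZMod (2*n) → Fin n × Bool) :
    ZMod (2*n) → Fin n × Bool :=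
  fun i => w (-(i + 1))


lemma dance_key_aux {M a b c a' b' c' : ℕ} (hb : b < M) (hc : c < M) (hb' : b' < M) (hc' : c' < M)
    (h : a*M*M + b*M + c = a'*M*M + b'*M + c') : a = a' ∧ b = b' ∧ c = c' := by
  have hM : 0 < M := lt_of_le_of_lt (Nat.zero_le c) hc
  have h2 : (a*M + b)*M + c = (a'*M + b')*M + c' := by ring_nf; ring_nf at h; linarith
  have hcc : c = c' := by
    have e1 : ((a*M + b)*M + c) % M = c := by
      rw [Nat.mul_comm, Nat.mul_add_mod, Nat.mod_eq_of_lt hc]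
    have e2 : ((a'*M + b')*M + c') % M = c' := by
      rw [Nat.mul_comm, Nat.mul_add_mod, Nat.mod_eq_of_lt hc']
    rw [← e1, ← e2, h2]
  have h3 : a*M + b = a'*M + b' := Nat.eq_of_mul_eq_mul_right hM (by omega)
  have hbb : b = b' := by
    have e1 : (a*M + b) % M = b := by
      rw [Nat.mul_comm, Nat.mul_add_mod, Nat.mod_eq_of_lt hb]
    have e2 : (a'*M + b') % M = b' := by
      rw [Nat.mul_comm, Nat.mul_add_mod, Nat.mod_eq_of_lt hb']
    rw [← e1, ← e2, h3]
  exact ⟨Nat.eq_of_mul_eq_mul_right hM (show a*M = a'*M by omega), hbb, hcc⟩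

lemma dance_key_lt_of_bit {M b c b' c' : ℕ} (hb : b < M) (hc : c < M) :
    0*M*M + b*M + c < 1*M*M + b'*M + c' := by
  have h1 : (b+1)*M ≤ M*M := Nat.mul_le_mul_right _ hb
  have h2 : b*M + M = (b+1)*M := by ring
  have h3 : 0*M*M = 0 := by ring
  have h4 : 1*M*M = M*M := by ring
  omega

/-- If, within every arc of the cut set `S`, every over position occurs before
every under position, then `(w, S)` admits a valid over-first schedule. -/
theorem exists_over_first_schedule_of_arcs_over_before_under
    (n : ℕ) (hn : 1 ≤ n) (w : ZMod (2*n) → Fin n × Bool) (hw : IsGaussCode w)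
    (S : Set (ZMod (2*n))) (hS : S.Nonempty)
    (harc : ∀ p q : ZMod (2*n), (w p).2 = true → (w q).2 = false →
      arcStart S p = arcStart S q → arcDist S p < arcDist S q) :
    ∃ τ : ZMod (2*n) ≃ Fin (2*n), ValidOverFirst w S τ := by
  haveI : NeZero (2*n) := ⟨by omega⟩
  classical
  obtain ⟨s0, hs0⟩ := hS
  have hmem : ∀ p : ZMod (2*n), (p - s0).val ∈ {d : ℕ | p - (d : ZMod (2*n)) ∈ S} := by
    intro p
    have hv : (((p - s0).val : ℕ) : ZMod (2*n)) = p - s0 := by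
      rw [ZMod.natCast_val, ZMod.cast_id]
    simp only [Set.mem_setOf_eq, hv, sub_sub_cancel]
    exact hs0
  have hdist_lt : ∀ p : ZMod (2*n), arcDist S p < 2*n := fun p =>
    lt_of_le_of_lt (Nat.sInf_le (hmem p)) (ZMod.val_lt _)
  have hstart_lt : ∀ p : ZMod (2*n), (arcStart S p).val < 2*n := fun p => ZMod.val_lt _
  set key : ZMod (2*n) → ℕ :=
    fun p => (if (w p).2 = true then 0 else 1) * (2*n) * (2*n) + (arcStart S p).val * (2*n) + arcDist S p
    with hkey
  have hkinj : Function.Injective key := by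
    intro p q h
    obtain ⟨_, hb, hc⟩ := dance_key_aux (hstart_lt p) (hdist_lt p) (hstart_lt q) (hdist_lt q) h
    have hst : arcStart S p = arcStart S q := by
      have : ((arcStart S p).val : ZMod (2*n)) = ((arcStart S q).val : ZMod (2*n)) := by rw [hb]
      rwa [ZMod.natCast_val, ZMod.cast_id, ZMod.natCast_val, ZMod.cast_id] at this
    have hp : p = arcStart S p + (arcDist S p : ZMod (2*n)) := by
      rw [arcStart]; ring
    have hq : q = arcStart S q + (arcDist S q : ZMod (2*n)) := by
      rw [arcStart]; ring
    rw [hp, hq, hst, hc]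
  set t : Finset ℕ := Finset.univ.image key with ht
  have hcard : t.card = 2*n := by
    rw [ht, Finset.card_image_of_injective _ hkinj, Finset.card_univ, ZMod.card]
  set iso := t.orderIsoOfFin hcard with hiso
  set g : ZMod (2*n) → Fin (2*n) :=
    fun p => iso.symm ⟨key p, Finset.mem_image_of_mem key (Finset.mem_univ p)⟩ with hg
  have hglt : ∀ p q, key p < key q → (g p : ℕ) < (g q : ℕ) := by
    intro p q h
    have : iso.symm ⟨key p, Finset.mem_image_of_mem key (Finset.mem_univ p)⟩
        < iso.symm ⟨key q, Finset.mem_image_of_mem key (Finset.mem_univ q)⟩ := by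
      rw [OrderIso.lt_iff_lt]
      exact Subtype.mk_lt_mk.mpr h
    exact this
  have hgi : Function.Injective g := by
    intro p q h
    apply hkinj
    exact congrArg Subtype.val (iso.symm.injective h)
  have hbij : Function.Bijective g :=
    (Fintype.bijective_iff_injective_and_card g).mpr ⟨hgi, by simp [ZMod.card]⟩
  refine ⟨Equiv.ofBijective g hbij, ?_, ?_⟩
  · intro p q hst hd
    show (g p : ℕ) < (g q : ℕ)
    apply hglt
    simp only [hkey]
    rcases hbp : (w p).2 <;> rcases hbq : (w q).2 <;> (try simp only [reduceIte])
    · rw [hst]; omega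
    · exact absurd (harc q p hbq hbp hst.symm) (by omega)
    · exact dance_key_lt_of_bit (hstart_lt p) (hdist_lt p)
    · rw [hst]; omega
  · intro c p q hp hq
    show (g p : ℕ) < (g q : ℕ)
    apply hglt
    simp only [hkey]
    have hbp : (w p).2 = true := by rw [hp]
    have hbq : (w q).2 = false := by rw [hq]
    rw [if_pos hbp, if_neg (by simp [hbq])]
    exact dance_key_lt_of_bit (hstart_lt p) (hdist_lt p)
end

section
/- Let w be a Gauss code on n ≥ 1 crossings whose underlying over/under word takes both values (there is at least one over position and at least one under position). Let S be the set of bridge starts of w, i.e., positions p with (w p).2 = true and (w (p-1)).2 = false. Then S is nonempty and there exists a valid over-first schedule for (w, S). Consequently, the over-first danceability number of w is at most the bridge number of w (the cardinality of S). -/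
section Aux

lemma my_cast_val {m : ℕ} [NeZero m] (a : ZMod m) : ((a.val : ℕ) : ZMod m) = a :=
  ZMod.natCast_rightInverse a

lemma arcStart_mem {m : ℕ} [NeZero m] {S : Set (ZMod m)} (hS : S.Nonempty) (p : ZMod m) :
    arcStart S p ∈ S := by
  obtain ⟨s, hs⟩ := hS
  have h : ((p - s).val : ℕ) ∈ {d : ℕ | p - (d : ZMod m) ∈ S} := by
    show p - _ ∈ S
    rw [my_cast_val]
    simpa using hs
  exact Nat.sInf_mem ⟨_, h⟩

lemma arcStart_add {m : ℕ} (S : Set (ZMod m)) (p : ZMod m) :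
    arcStart S p + (arcDist S p : ZMod m) = p :=
  sub_add_cancel p _

lemma bridge_nonempty {n : ℕ} [NeZero (2*n)] (w : ZMod (2*n) → Fin n × Bool)
    (hover : ∃ p, (w p).2 = true) (hunder : ∃ p, (w p).2 = false) :
    (BridgeStarts w).Nonempty := by
  obtain ⟨p, hp⟩ := hover
  obtain ⟨q, hq⟩ := hunder
  set T := {k : ℕ | (w (p - (k : ZMod (2*n)))).2 = false} with hT
  have hTne : ((p - q).val : ℕ) ∈ T := by
    show (w _).2 = false
    rw [my_cast_val]
    simpa using hq
  set k := sInf T with hk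
  have hkT : k ∈ T := Nat.sInf_mem ⟨_, hTne⟩
  have hk1 : 1 ≤ k := by
    rcases Nat.eq_zero_or_pos k with h | h
    · exfalso
      have := hkT
      rw [h] at this
      simp only [Nat.cast_zero, sub_zero, hT, Set.mem_setOf_eq] at this
      rw [hp] at this
      exact Bool.true_eq_false.mp this
    · exact h
  refine ⟨p - ((k - 1 : ℕ) : ZMod (2*n)), ?_, ?_⟩
  · have hnot : k - 1 ∉ T := Nat.notMem_of_lt_sInf (by omega)
    cases hb : (w (p - ((k - 1 : ℕ) : ZMod (2*n)))).2 with
    | false => exact absurd hb hnot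
    | true => rfl
  · have : p - ((k - 1 : ℕ) : ZMod (2*n)) - 1 = p - (k : ZMod (2*n)) := by
      rw [Nat.cast_sub hk1]; push_cast; ring
    rw [this]; exact hkT

/-- Within an arc (w.r.t. bridge starts), an under position cannot come
strictly before an over position. -/
lemma no_under_before_over {n : ℕ} [NeZero (2*n)] (w : ZMod (2*n) → Fin n × Bool)
    {p q : ZMod (2*n)}
    (hs : arcStart (BridgeStarts w) p = arcStart (BridgeStarts w) q)
    (hd : arcDist (BridgeStarts w) p < arcDist (BridgeStarts w) q)
    (hp : (w p).2 = false) (hq : (w q).2 = true) : False := by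
  set S := BridgeStarts w with hSdef
  set dp := arcDist S p with hdp
  set dq := arcDist S q with hdq
  set s := arcStart S q with hsq
  have hqeq : s + (dq : ZMod (2*n)) = q := arcStart_add S q
  have hpeq : s + (dp : ZMod (2*n)) = p := by
    rw [← hs]; exact arcStart_add S p
  set T := {j : ℕ | dp < j ∧ j ≤ dq ∧ (w (s + (j : ZMod (2*n)))).2 = true} with hT
  have hTne : dq ∈ T := ⟨hd, le_refl _, by rw [hqeq]; exact hq⟩
  set j := sInf T with hj
  obtain ⟨hj1, hj2, hj3⟩ : j ∈ T := Nat.sInf_mem ⟨_, hTne⟩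
  have hj1' : 1 ≤ j := by omega
  have hcast : s + (j : ZMod (2*n)) - 1 = s + ((j - 1 : ℕ) : ZMod (2*n)) := by
    rw [Nat.cast_sub hj1']; push_cast; ring
  have hprev : (w (s + (j : ZMod (2*n)) - 1)).2 = false := by
    rw [hcast]
    rcases Nat.eq_or_lt_of_le (Nat.succ_le_of_lt hj1) with hcase | hcase
    · have : j - 1 = dp := by omega
      rw [this, hpeq]; exact hp
    · have hnot : j - 1 ∉ T := Nat.notMem_of_lt_sInf (by omega)
      cases hb : (w (s + ((j - 1 : ℕ) : ZMod (2*n)))).2 with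
      | false => rfl
      | true => exact absurd ⟨by omega, by omega, hb⟩ hnot
  have hmem : s + (j : ZMod (2*n)) ∈ S := ⟨hj3, hprev⟩
  have hmem' : dq - j ∈ {d : ℕ | q - (d : ZMod (2*n)) ∈ S} := by
    show q - _ ∈ S
    have : q - ((dq - j : ℕ) : ZMod (2*n)) = s + (j : ZMod (2*n)) := by
      rw [Nat.cast_sub hj2, ← hqeq]; push_cast; ring
    rw [this]; exact hmem
  have h2 : arcDist S q ≤ dq - j := Nat.sInf_le hmem'
  omega

end Aux

/-- Cutting at the bridge starts yields a valid over-first schedule; hence the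
over-first danceability number is at most the bridge number. -/
theorem overDance_le_bridgeNumber
    (n : ℕ) (hn : 1 ≤ n) (w : ZMod (2*n) → Fin n × Bool) (hw : IsGaussCode w)
    (hover : ∃ p, (w p).2 = true) (hunder : ∃ p, (w p).2 = false) :
    (BridgeStarts w).Nonempty ∧
    (∃ τ : ZMod (2*n) ≃ Fin (2*n), ValidOverFirst w (BridgeStarts w) τ) ∧
    overDanceNum w ≤ Nat.card (BridgeStarts w) := by
  haveI : NeZero (2*n) := ⟨by omega⟩
  have hS : (BridgeStarts w).Nonempty := bridge_nonempty w hover hunder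
  set S := BridgeStarts w with hSdef
  -- key function into a lexicographic order
  set key : ZMod (2*n) → ℕ ×ₗ (ℕ ×ₗ ℕ) := fun p =>
    toLex ((if (w p).2 then 0 else 1), toLex ((arcStart S p).val, arcDist S p)) with hkey
  have hinj : Function.Injective key := by
    intro a b hab
    simp only [hkey] at hab
    have h := toLex.injective hab
    rw [Prod.mk.injEq] at h
    obtain ⟨-, h23⟩ := h
    have h23' := toLex.injective h23
    rw [Prod.mk.injEq] at h23'
    obtain ⟨h2, h3⟩ := h23'
    have hstart : arcStart S a = arcStart S b := ZMod.val_injective (2*n) h2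
    calc a = arcStart S a + (arcDist S a : ZMod (2*n)) := (arcStart_add S a).symm
      _ = arcStart S b + (arcDist S b : ZMod (2*n)) := by rw [hstart, h3]
      _ = b := arcStart_add S b
  letI : LinearOrder (ZMod (2*n)) := LinearOrder.lift' key hinj
  let e := monoEquivOfFin (ZMod (2*n)) (ZMod.card (2*n))
  set τ : ZMod (2*n) ≃ Fin (2*n) := e.symm.toEquiv with hτdef
  have hτ : ∀ p q, key p < key q → (τ p : ℕ) < (τ q : ℕ) := by
    intro p q h
    have hlt : p < q := h
    exact e.symm.lt_iff_lt.mpr hlt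
  have hvalid : ValidOverFirst w S τ := by
    constructor
    · intro p q hst hd
      apply hτ
      simp only [hkey]
      rw [Prod.Lex.lt_iff]
      cases hp : (w p).2 <;> cases hq : (w q).2
      · -- false, false
        right
        refine ⟨rfl, ?_⟩
        rw [Prod.Lex.lt_iff]
        exact Or.inr ⟨by rw [hst]; rfl, hd⟩
      · -- p false, q true : impossible
        exact absurd (no_under_before_over w hst hd hp hq) not_false
      · -- p true, q false
        left; simp [hp, hq]
      · -- true, true
        right
        refine ⟨rfl, ?_⟩
        rw [Prod.Lex.lt_iff]
        exact Or.inr ⟨by rw [hst]; rfl, hd⟩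
    · intro c p q hp hq
      apply hτ
      simp only [hkey]
      rw [Prod.Lex.lt_iff]
      left
      have hp2 : (w p).2 = true := by rw [hp]
      have hq2 : (w q).2 = false := by rw [hq]
      simp [hp2, hq2]
  refine ⟨hS, ⟨τ, hvalid⟩, ?_⟩
  exact Nat.sInf_le ⟨S, hS, rfl, τ, hvalid⟩
end
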